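/- Let k be a positive integer and let f : ℝ → ℝ be a Fibonacci function with period k, i.e. f(x+2k) = f(x+k) + f(x) for all real x. Assume f(x) > 0 for all real x. Then f(x+k)/f(x) tends to φ as x → ∞ (limit over the real numbers). -/

import Mathlib

theorem stmt_10 (k : ℕ) (hk : 0 < k) (f : ℝ → ℝ)
    (hf : ∀ x : ℝ, f (x + 2 * (k : ℝ)) = f (x + (k : ℝ)) + f x)
    (hpos : ∀ x : ℝ, 0 < f x) :
    Filter.Tendsto (fun x : ℝ => f (x + (k : ℝ)) / f x) Filter.atTop
      (nhds ((1 + Real.sqrt 5) / 2)) := by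
  set φ : ℝ := (1 + Real.sqrt 5) / 2 with hφdef
  have h5 : Real.sqrt 5 ^ 2 = 5 := Real.sq_sqrt (by norm_num)
  have hs0 : (0:ℝ) ≤ Real.sqrt 5 := Real.sqrt_nonneg 5
  have hs1 : (1:ℝ) < Real.sqrt 5 := by nlinarith
  have hs3 : Real.sqrt 5 < 3 := by nlinarith
  have hφ1 : 1 < φ := by rw [hφdef]; linarith
  have hφ2 : φ < 2 := by rw [hφdef]; linarith
  have hφ0 : 0 < φ := by linarith
  have hφsq : φ ^ 2 = φ + 1 := by rw [hφdef]; field_simp; nlinarith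
  set g : ℝ → ℝ := fun x => f (x + (k:ℝ)) / f x with hg
  have hgpos : ∀ x, 0 < g x := fun x => div_pos (hpos _) (hpos _)
  have h1 : ∀ x, g (x + (k:ℝ)) = 1 + 1 / g x := by
    intro x
    have hne : f (x + (k:ℝ)) ≠ 0 := ne_of_gt (hpos _)
    have hne2 : f x ≠ 0 := ne_of_gt (hpos _)
    have hfx := hf x
    simp only [hg]
    rw [show x + (k:ℝ) + (k:ℝ) = x + 2*(k:ℝ) by ring, hfx]
    field_simp
  have h2 : ∀ x, 1 < g x := by
    intro x
    have h := h1 (x - (k:ℝ))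
    rw [sub_add_cancel] at h
    have hp := hgpos (x - (k:ℝ))
    have : 0 < 1 / g (x - (k:ℝ)) := by positivity
    linarith [h.ge, h.le]
  have h3 : ∀ x, g x < 2 := by
    intro x
    have h := h1 (x - (k:ℝ))
    rw [sub_add_cancel] at h
    have h2' := h2 (x - (k:ℝ))
    have : 1 / g (x - (k:ℝ)) < 1 := by
      rw [div_lt_one (by linarith)]; linarith
    linarith [h.le]
  have hcontr : ∀ x, |g (x + (k:ℝ)) - φ| ≤ (1/φ) * |g x - φ| := by
    intro x
    have hgx := h2 x
    have hgx0 : (0:ℝ) < g x := by linarith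
    have key : g (x + (k:ℝ)) - φ = (φ - g x) / (g x * φ) := by
      rw [h1 x]
      field_simp
      linear_combination (-(g x)^2) * hφsq + ((g x)^2 - g x) / 4 * h5
    rw [key, abs_div, abs_sub_comm]
    rw [abs_of_pos (by positivity : (0:ℝ) < g x * φ)]
    rw [div_le_iff₀ (by positivity)]
    have heq : (1/φ) * |g x - φ| * (g x * φ) = |g x - φ| * g x := by
      field_simp
    rw [heq]
    nlinarith [abs_nonneg (g x - φ)]
  have hbound : ∀ x, |g x - φ| ≤ 1 := by
    intro x
    rw [abs_le]
    constructor
    · linarith [h2 x]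
    · linarith [h3 x]
  have hiter : ∀ n : ℕ, ∀ x, |g x - φ| ≤ (1/φ)^n := by
    intro n
    induction n with
    | zero => intro x; simpa using hbound x
    | succ n ih =>
      intro x
      have h := hcontr (x - (k:ℝ))
      rw [sub_add_cancel] at h
      calc |g x - φ| ≤ (1/φ) * |g (x - (k:ℝ)) - φ| := h
        _ ≤ (1/φ) * (1/φ)^n :=
            mul_le_mul_of_nonneg_left (ih _) (by positivity)
        _ = (1/φ)^(n+1) := by ring
  have hconst : ∀ x, g x = φ := by
    intro x
    have h0 : |g x - φ| ≤ 0 := by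
      by_contra hcon
      push_neg at hcon
      obtain ⟨n, hn⟩ := exists_pow_lt_of_lt_one hcon
        ((div_lt_one hφ0).mpr hφ1)
      exact absurd (hiter n x) (not_le.mpr hn)
    have h0' : |g x - φ| = 0 := le_antisymm h0 (abs_nonneg _)
    have := abs_eq_zero.mp h0'
    linarith [this.ge, this.le]
  have hfun : g = fun _ : ℝ => φ := funext hconst
  rw [hfun]
  exact tendsto_const_nhds
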